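/- Let Γ be a nontrivial group and Λ ≤ Γ a subgroup of finite index. Then genrk(Γ) ≤ genrk(Λ) + [Γ:Λ] − 1 and genrk(Λ) ≤ [Γ:Λ]·(genrk(Γ) − 1) + 1. -/

import Mathlib

open Subgroup

section SchreierRep

attribute [local instance] Classical.propDecidable

variable {G : Type*} [Group G] (H : Subgroup G) (S : Set G) (hS : Subgroup.closure S = ⊤)
include hS

theorem exists_goodWord (q : Quotient (QuotientGroup.rightRel H)) :
    ∃ n : ℕ, ∃ l : List G, (∀ x ∈ l, x ∈ S ∨ x⁻¹ ∈ S) ∧ l.length = n ∧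
      Quotient.mk'' l.prod = q := by
  induction q using Quotient.inductionOn' with
  | h g =>
    have hg : g ∈ Submonoid.closure (S ∪ S⁻¹) := by
      rw [← Subgroup.closure_toSubmonoid, hS]; trivial
    obtain ⟨l, hl, hprod⟩ := Submonoid.exists_list_of_mem_closure hg
    refine ⟨l.length, l, fun x hx => ?_, rfl, by rw [hprod]⟩
    rcases hl x hx with h | h
    · exact Or.inl h
    · exact Or.inr (Set.mem_inv.mp h)

/-- length of a shortest `S`-word representing the right coset `q`. -/
noncomputable def wlen (q : Quotient (QuotientGroup.rightRel H)) : ℕ :=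
  Nat.find (exists_goodWord H S hS q)

theorem goodWord_ne_nil (q : Quotient (QuotientGroup.rightRel H))
    (h0 : wlen H S hS q ≠ 0) : (Nat.find_spec (exists_goodWord H S hS q)).choose ≠ [] := by
  intro h
  have hl := (Nat.find_spec (exists_goodWord H S hS q)).choose_spec
  rw [h] at hl
  exact h0 (hl.2.1.symm.trans rfl) |>.elim

/-- Schreier-transversal representative of a right coset, built by recursion on `wlen`. -/
noncomputable def repQ (q : Quotient (QuotientGroup.rightRel H)) : G :=
  if h0 : wlen H S hS q = 0 then 1
  else
    repQ (Quotient.mk'' (Nat.find_spec (exists_goodWord H S hS q)).choose.dropLast.prod) *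
      (Nat.find_spec (exists_goodWord H S hS q)).choose.getLast (goodWord_ne_nil H S hS q h0)
termination_by wlen H S hS q
decreasing_by
  have hl := (Nat.find_spec (exists_goodWord H S hS q)).choose_spec
  have hle : wlen H S hS (Quotient.mk''
      (Nat.find_spec (exists_goodWord H S hS q)).choose.dropLast.prod) ≤
      (Nat.find_spec (exists_goodWord H S hS q)).choose.dropLast.length :=
    Nat.find_le ⟨_, fun x hx => hl.1 x (List.dropLast_subset _ hx), rfl, rfl⟩
  have hlen : (Nat.find_spec (exists_goodWord H S hS q)).choose.dropLast.length =
      wlen H S hS q - 1 := by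
    rw [List.length_dropLast, hl.2.1]; rfl
  omega


theorem wlen_eq_zero {q : Quotient (QuotientGroup.rightRel H)}
    (h0 : wlen H S hS q = 0) : q = Quotient.mk'' (1 : G) := by
  have hl := (Nat.find_spec (exists_goodWord H S hS q)).choose_spec
  have : (Nat.find_spec (exists_goodWord H S hS q)).choose = [] :=
    List.length_eq_zero_iff.mp (hl.2.1.trans h0)
  rw [← hl.2.2, this, List.prod_nil]

theorem repQ_step {q : Quotient (QuotientGroup.rightRel H)} (h0 : wlen H S hS q ≠ 0) :
    ∃ (q' : Quotient (QuotientGroup.rightRel H)) (x g' : G),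
      wlen H S hS q' < wlen H S hS q ∧ (x ∈ S ∨ x⁻¹ ∈ S) ∧
      repQ H S hS q = repQ H S hS q' * x ∧ Quotient.mk'' g' = q' ∧
      Quotient.mk'' (g' * x) = q := by
  have hl := (Nat.find_spec (exists_goodWord H S hS q)).choose_spec
  have hprod : (Nat.find_spec (exists_goodWord H S hS q)).choose.dropLast.prod *
      (Nat.find_spec (exists_goodWord H S hS q)).choose.getLast (goodWord_ne_nil H S hS q h0) =
      (Nat.find_spec (exists_goodWord H S hS q)).choose.prod := by
    conv_rhs => rw [← List.dropLast_append_getLast (goodWord_ne_nil H S hS q h0)]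
    rw [List.prod_append, List.prod_cons, List.prod_nil, mul_one]
  refine ⟨Quotient.mk'' (Nat.find_spec (exists_goodWord H S hS q)).choose.dropLast.prod,
    (Nat.find_spec (exists_goodWord H S hS q)).choose.getLast (goodWord_ne_nil H S hS q h0),
    (Nat.find_spec (exists_goodWord H S hS q)).choose.dropLast.prod, ?_, ?_, ?_, rfl, ?_⟩
  · have hle : wlen H S hS (Quotient.mk''
        (Nat.find_spec (exists_goodWord H S hS q)).choose.dropLast.prod) ≤
        (Nat.find_spec (exists_goodWord H S hS q)).choose.dropLast.length :=
      Nat.find_le ⟨_, fun x hx => hl.1 x (List.dropLast_subset _ hx), rfl, rfl⟩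
    have hlen : (Nat.find_spec (exists_goodWord H S hS q)).choose.dropLast.length =
        wlen H S hS q - 1 := by
      rw [List.length_dropLast, hl.2.1]; rfl
    omega
  · exact hl.1 _ (List.getLast_mem _)
  · rw [repQ, dif_neg h0]
  · rw [hprod]; exact hl.2.2

theorem repQ_mk (q : Quotient (QuotientGroup.rightRel H)) :
    Quotient.mk'' (repQ H S hS q) = q := by
  have key : ∀ (n : ℕ) (q : Quotient (QuotientGroup.rightRel H)), wlen H S hS q ≤ n →
      Quotient.mk'' (repQ H S hS q) = q := by
    intro n
    induction n with
    | zero =>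
      intro q hq
      rw [repQ, dif_pos (Nat.le_zero.mp hq), wlen_eq_zero H S hS (Nat.le_zero.mp hq)]
    | succ n IH =>
      intro q hq
      by_cases h0 : wlen H S hS q = 0
      · rw [repQ, dif_pos h0, wlen_eq_zero H S hS h0]
      · obtain ⟨q', x, g', hlt, _, heq, hg', hgx⟩ := repQ_step H S hS h0
        have hIH : Quotient.mk'' (repQ H S hS q') = q' := IH q' (by omega)
        rw [heq, ← hgx]
        have h1 : g' * (repQ H S hS q')⁻¹ ∈ H :=
          QuotientGroup.rightRel_apply.mp (Quotient.exact' (hIH.trans hg'.symm))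
        refine Quotient.sound' (QuotientGroup.rightRel_apply.mpr ?_)
        have : g' * x * (repQ H S hS q' * x)⁻¹ = g' * (repQ H S hS q')⁻¹ := by group
        rw [this]; exact h1
  exact key (wlen H S hS q) q le_rfl

theorem repQ_one : repQ H S hS (Quotient.mk'' (1 : G)) = 1 := by
  have h0 : wlen H S hS (Quotient.mk'' (1 : G)) = 0 :=
    Nat.le_zero.mp (Nat.find_le ⟨[], by simp, rfl, by simp⟩)
  rw [repQ, dif_pos h0]

theorem repQ_injective : Function.Injective (repQ H S hS) := fun q₁ q₂ h => by
  rw [← repQ_mk H S hS q₁, ← repQ_mk H S hS q₂, h]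

theorem repQ_eq_one_iff {q : Quotient (QuotientGroup.rightRel H)} :
    repQ H S hS q = 1 ↔ q = Quotient.mk'' (1 : G) := by
  constructor
  · intro h; rw [← repQ_mk H S hS q, h]
  · rintro rfl; exact repQ_one H S hS

/-- The parent edge of a coset in the Schreier tree. -/
noncomputable def stepPair (q : Quotient (QuotientGroup.rightRel H)) :
    Quotient (QuotientGroup.rightRel H) × G :=
  if h : wlen H S hS q = 0 then (q, 1)
  else ((repQ_step H S hS h).choose, (repQ_step H S hS h).choose_spec.choose)

theorem stepPair_spec {q : Quotient (QuotientGroup.rightRel H)} (h0 : wlen H S hS q ≠ 0) :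
    wlen H S hS (stepPair H S hS q).1 < wlen H S hS q ∧
    ((stepPair H S hS q).2 ∈ S ∨ ((stepPair H S hS q).2)⁻¹ ∈ S) ∧
    repQ H S hS q = repQ H S hS (stepPair H S hS q).1 * (stepPair H S hS q).2 := by
  obtain ⟨g', h1, h2, h3, -, -⟩ := (repQ_step H S hS h0).choose_spec.choose_spec
  rw [stepPair, dif_neg h0]
  exact ⟨h1, h2, h3⟩

end SchreierRep

section SchreierSharp

open scoped Pointwise

attribute [local instance] Classical.propDecidable

open Subgroup IsComplement in
/-- Sharp Schreier bound: a subgroup of index `n` of a group generated by `d` elements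
is generated by at most `n*d - (n-1)` elements. -/
theorem schreier_sharp {G : Type*} [Group G] (H : Subgroup G) [H.FiniteIndex]
    (S : Finset G) (hS : Subgroup.closure (S : Set G) = ⊤) :
    ∃ T : Finset ↥H, T.card + H.index ≤ H.index * S.card + 1 ∧
      Subgroup.closure (T : Set ↥H) = ⊤ := by
  haveI : Finite (G ⧸ H) := H.finite_quotient_of_finiteIndex
  haveI : Finite (Quotient (QuotientGroup.rightRel H)) :=
    Finite.of_equiv _ (QuotientGroup.quotientRightRelEquivQuotientLeftRel H).symm
  haveI : Fintype (Quotient (QuotientGroup.rightRel H)) := Fintype.ofFinite _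
  set rep : Quotient (QuotientGroup.rightRel H) → G := repQ H (S : Set G) hS with hrep_def
  set Rf : Finset G := Finset.univ.image rep with hRf_def
  have hRf_coe : (Rf : Set G) = Set.range rep := by
    rw [hRf_def, Finset.coe_image, Finset.coe_univ, Set.image_univ]
  have hR : IsComplement (H : Set G) (Rf : Set G) := by
    rw [hRf_coe]; exact isComplement_range_right (repQ_mk H (S : Set G) hS)
  have hrep_mem : ∀ q, rep q ∈ Rf := fun q => Finset.mem_image.mpr ⟨q, Finset.mem_univ q, rfl⟩
  have h1R : (1 : G) ∈ Rf := by
    have := hrep_mem (Quotient.mk'' (1 : G))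
    rwa [hrep_def, repQ_one H (S : Set G) hS] at this
  -- the chosen representative of the coset of `g` is `rep ⟦g⟧`
  have key : ∀ g : G, (toRightFun hR g : G) = rep (Quotient.mk'' g) := by
    intro g
    have huniq := isComplement_iff_existsUnique_mul_inv_mem.mp hR g
    have h2 : g * (rep (Quotient.mk'' g))⁻¹ ∈ H :=
      QuotientGroup.rightRel_apply.mp
        (Quotient.exact' (repQ_mk H (S : Set G) hS (Quotient.mk'' g)))
    have := huniq.unique (mul_inv_toRightFun_mem hR g)
      (y₂ := ⟨rep (Quotient.mk'' g), Finset.mem_coe.mpr (hrep_mem _)⟩) h2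
    exact congrArg Subtype.val this
  have hcard : Rf.card = H.index := by
    rw [hRf_def, Finset.card_image_of_injective _ (repQ_injective H (S : Set G) hS),
      Finset.card_univ, ← Nat.card_eq_fintype_card,
      Nat.card_congr (QuotientGroup.quotientRightRelEquivQuotientLeftRel H), H.index_eq_card]
  set ψ : G → ↥H := fun g => ⟨g * (toRightFun hR g : G)⁻¹, mul_inv_toRightFun_mem hR g⟩ with hψ_def
  set T₀ : Finset ↥H := (Rf * S).image ψ with hT₀_def
  have hT₀top : Subgroup.closure (T₀ : Set ↥H) = ⊤ := closure_mul_image_eq_top' hR h1R hS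
  set T : Finset ↥H := T₀.erase 1 with hT_def
  have hTtop : Subgroup.closure (T : Set ↥H) = ⊤ := by
    rw [eq_top_iff, ← hT₀top, Subgroup.closure_le]
    intro x hx
    by_cases hx1 : x = 1
    · simpa [hx1] using Subgroup.one_mem _
    · exact Subgroup.subset_closure (Finset.mem_erase.mpr ⟨hx1, hx⟩)
  refine ⟨T, ?_, hTtop⟩
  -- counting
  set U : Finset (G × G) :=
    (Rf ×ˢ S).filter (fun p => p.1 * p.2 * (toRightFun hR (p.1 * p.2) : G)⁻¹ = 1) with hU_def
  have hT₀im : T₀ = (Rf ×ˢ S).image (fun p => ψ (p.1 * p.2)) := by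
    rw [hT₀_def, Finset.mul_def, Finset.image_image]; rfl
  have hTsub : T ⊆ ((Rf ×ˢ S) \ U).image (fun p => ψ (p.1 * p.2)) := by
    intro x hx
    obtain ⟨hx1, hx0⟩ := Finset.mem_erase.mp hx
    rw [hT₀im] at hx0
    obtain ⟨p, hp, hpx⟩ := Finset.mem_image.mp hx0
    refine Finset.mem_image.mpr ⟨p, Finset.mem_sdiff.mpr ⟨hp, fun hpU => hx1 ?_⟩, hpx⟩
    have := (Finset.mem_filter.mp hpU).2
    rw [← hpx]
    exact Subtype.ext this
  have hTcard : T.card ≤ (Rf ×ˢ S).card - U.card := by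
    calc T.card ≤ (((Rf ×ˢ S) \ U).image (fun p => ψ (p.1 * p.2))).card :=
          Finset.card_le_card hTsub
      _ ≤ ((Rf ×ˢ S) \ U).card := Finset.card_image_le
      _ = (Rf ×ˢ S).card - U.card := Finset.card_sdiff_of_subset (Finset.filter_subset _ _)
  have hUsub : U ⊆ Rf ×ˢ S := Finset.filter_subset _ _
  -- facts about elements of `Rf`
  have hfix : ∀ r ∈ Rf, repQ H (S : Set G) hS (Quotient.mk'' r) = r := by
    intro r hr
    obtain ⟨q, -, rfl⟩ := Finset.mem_image.mp hr
    rw [repQ_mk H (S : Set G) hS q]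
  have hfixr : ∀ r ∈ Rf, rep (Quotient.mk'' r) = r := hfix
  have hwne : ∀ r ∈ Rf, r ≠ 1 → wlen H (S : Set G) hS (Quotient.mk'' r) ≠ 0 := by
    intro r hr hr1 h0
    apply hr1
    rw [← hfix r hr, wlen_eq_zero H (S : Set G) hS h0, repQ_one]
  -- the injection from `Rf.erase 1` into `U`
  have hinj : (Rf.erase 1).card ≤ U.card := by
    set ι : G → G × G := fun r =>
      if (stepPair H (S : Set G) hS (Quotient.mk'' r)).2 ∈ S
        then (rep (stepPair H (S : Set G) hS (Quotient.mk'' r)).1,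
          (stepPair H (S : Set G) hS (Quotient.mk'' r)).2)
        else (r, ((stepPair H (S : Set G) hS (Quotient.mk'' r)).2)⁻¹) with hι_def
    refine Finset.card_le_card_of_injOn ι ?_ ?_
    · intro r hr
      obtain ⟨hr1, hrR⟩ := Finset.mem_erase.mp hr
      have hw := hwne r hrR hr1
      obtain ⟨hlt, hxS, heq⟩ := stepPair_spec H (S : Set G) hS hw
      set q' := (stepPair H (S : Set G) hS (Quotient.mk'' r)).1 with hq'_def
      set x := (stepPair H (S : Set G) hS (Quotient.mk'' r)).2 with hx_def
      have heqr : r = rep q' * x := by rw [← hfixr r hrR]; exact heq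
      rw [hι_def]
      by_cases hxin : x ∈ S
      · simp only [← hq'_def, ← hx_def, if_pos hxin]
        refine Finset.mem_filter.mpr ⟨Finset.mem_product.mpr ⟨hrep_mem q', hxin⟩, ?_⟩
        have hx1 : rep q' * x = r := heqr.symm
        show rep q' * x * (toRightFun hR (rep q' * x) : G)⁻¹ = 1
        rw [hx1, key r, hfixr r hrR, mul_inv_cancel]
      · simp only [← hq'_def, ← hx_def, if_neg hxin]
        have hxinv : x⁻¹ ∈ S := by
          rcases hxS with h | h
          · exact absurd (Finset.mem_coe.mp h) hxin
          · exact Finset.mem_coe.mp h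
        refine Finset.mem_filter.mpr ⟨Finset.mem_product.mpr ⟨hrR, hxinv⟩, ?_⟩
        have hx1 : r * x⁻¹ = rep q' := by rw [heqr]; group
        have h2 : rep (Quotient.mk'' (rep q')) = rep q' :=
          congrArg rep (repQ_mk H (S : Set G) hS q')
        show r * x⁻¹ * (toRightFun hR (r * x⁻¹) : G)⁻¹ = 1
        rw [hx1, key (rep q'), h2, mul_inv_cancel]
    · intro r₁ hr₁ r₂ hr₂ hι
      rw [Finset.coe_erase, Set.mem_diff, Finset.mem_coe] at hr₁ hr₂
      have hw₁ := hwne r₁ hr₁.1 (by simpa using hr₁.2)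
      have hw₂ := hwne r₂ hr₂.1 (by simpa using hr₂.2)
      obtain ⟨hlt₁, hxS₁, heq₁⟩ := stepPair_spec H (S : Set G) hS hw₁
      obtain ⟨hlt₂, hxS₂, heq₂⟩ := stepPair_spec H (S : Set G) hS hw₂
      set q₁ := (stepPair H (S : Set G) hS (Quotient.mk'' r₁)).1 with hq₁_def
      set x₁ := (stepPair H (S : Set G) hS (Quotient.mk'' r₁)).2 with hx₁_def
      set q₂ := (stepPair H (S : Set G) hS (Quotient.mk'' r₂)).1 with hq₂_def
      set x₂ := (stepPair H (S : Set G) hS (Quotient.mk'' r₂)).2 with hx₂_def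
      have heqr₁ : r₁ = rep q₁ * x₁ := by rw [← hfixr r₁ hr₁.1]; exact heq₁
      have heqr₂ : r₂ = rep q₂ * x₂ := by rw [← hfixr r₂ hr₂.1]; exact heq₂
      rw [hι_def] at hι
      simp only at hι
      by_cases h₁ : x₁ ∈ S <;> by_cases h₂ : x₂ ∈ S
      · rw [if_pos h₁, if_pos h₂] at hι
        have ha : rep q₁ = rep q₂ := (Prod.ext_iff.mp hι).1
        have hb : x₁ = x₂ := (Prod.ext_iff.mp hι).2
        rw [heqr₁, heqr₂, ha, hb]
      · rw [if_pos h₁, if_neg h₂] at hι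
        exfalso
        have ha : rep q₁ = r₂ := (Prod.ext_iff.mp hι).1
        have hb : x₁ = x₂⁻¹ := (Prod.ext_iff.mp hι).2
        have hq₁e : q₁ = Quotient.mk'' r₂ := by
          rw [← repQ_mk H (S : Set G) hS q₁]; exact congrArg _ ha
        have hr₁eq : rep q₂ = r₁ := by
          rw [heqr₁, ha, hb, heqr₂]; group
        have hq₂e : q₂ = Quotient.mk'' r₁ := by
          rw [← repQ_mk H (S : Set G) hS q₂]; exact congrArg _ hr₁eq
        rw [hq₁e] at hlt₁
        rw [hq₂e] at hlt₂
        omega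
      · rw [if_neg h₁, if_pos h₂] at hι
        exfalso
        have ha : r₁ = rep q₂ := (Prod.ext_iff.mp hι).1
        have hb : x₁⁻¹ = x₂ := (Prod.ext_iff.mp hι).2
        have hq₂e : q₂ = Quotient.mk'' r₁ := by
          rw [← repQ_mk H (S : Set G) hS q₂]; exact congrArg _ ha.symm
        have hr₂eq : rep q₁ = r₂ := by
          rw [heqr₂, ← ha, ← hb, heqr₁]; group
        have hq₁e : q₁ = Quotient.mk'' r₂ := by
          rw [← repQ_mk H (S : Set G) hS q₁]; exact congrArg _ hr₂eq
        rw [hq₁e] at hlt₁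
        rw [hq₂e] at hlt₂
        omega
      · rw [if_neg h₁, if_neg h₂] at hι
        exact (Prod.ext_iff.mp hι).1
  have hprod_card : (Rf ×ˢ S).card = H.index * S.card := by
    rw [Finset.card_product, hcard]
  have hU_le : U.card ≤ (Rf ×ˢ S).card := Finset.card_le_card hUsub
  have herase : (Rf.erase 1).card = Rf.card - 1 := Finset.card_erase_of_mem h1R
  have h1le : 1 ≤ Rf.card := Finset.card_pos.mpr ⟨1, h1R⟩
  rw [hcard] at herase h1le
  omega

end SchreierSharp

open scoped commutatorElement

/-- The mixed commutator length `cl_{G,N}` (∞ if not a product of mixed commutators). -/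
noncomputable def clGN {G : Type*} [Group G] (N : Subgroup G) (x : G) : ℕ∞ :=
  sInf {n : ℕ∞ | ∃ k : ℕ, n = k ∧ ∃ g v : Fin k → G, (∀ i, v i ∈ N) ∧
    x = (List.ofFn fun i => ⁅g i, v i⁆).prod}

/-- The rank of a subgroup: minimal size of a generating set. -/
noncomputable def rk {G : Type*} [Group G] (H : Subgroup G) : ℕ∞ :=
  sInf {n : ℕ∞ | ∃ S : Finset G, Subgroup.closure (S : Set G) = H ∧ n = S.card}

/-- The intermediate rank `intrk^Γ(Λ) = inf {rk Θ | Λ ≤ Θ ≤ Γ}`. -/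
noncomputable def intrk {G : Type*} [Group G] (Λ : Subgroup G) : ℕ∞ :=
  sInf {n : ℕ∞ | ∃ Θ : Subgroup G, Λ ≤ Θ ∧ n = rk Θ}

/-- The general rank in the sense of Malcev. -/
noncomputable def genrk (G : Type*) [Group G] : ℕ∞ :=
  sSup {n : ℕ∞ | ∃ Λ : Subgroup G, Λ.FG ∧ n = intrk Λ}

/-- The special rank in the sense of Malcev. -/
noncomputable def sperk (G : Type*) [Group G] : ℕ∞ :=
  sSup {n : ℕ∞ | ∃ Λ : Subgroup G, Λ.FG ∧ n = rk Λ}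

section RkLemmas

variable {G : Type*} [Group G]

theorem rk_le_card {H : Subgroup G} {S : Finset G} (h : Subgroup.closure (S : Set G) = H) :
    rk H ≤ S.card :=
  sInf_le ⟨S, h, rfl⟩

theorem exists_gen_of_rk_ne_top {H : Subgroup G} (h : rk H ≠ ⊤) :
    ∃ S : Finset G, Subgroup.closure (S : Set G) = H ∧ (S.card : ℕ∞) = rk H := by
  have hne : {n : ℕ∞ | ∃ S : Finset G, Subgroup.closure (S : Set G) = H ∧ n = S.card}.Nonempty := by
    by_contra hc
    rw [Set.not_nonempty_iff_eq_empty] at hc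
    exact h (by rw [rk, hc, sInf_empty])
  obtain ⟨S, hS, hcard⟩ := csInf_mem hne
  exact ⟨S, hS, hcard.symm⟩

theorem intrk_le_rk {Λ Θ : Subgroup G} (h : Λ ≤ Θ) : intrk Λ ≤ rk Θ :=
  sInf_le ⟨Θ, h, rfl⟩

theorem exists_intrk (Λ : Subgroup G) : ∃ Θ : Subgroup G, Λ ≤ Θ ∧ rk Θ = intrk Λ := by
  have hne : {n : ℕ∞ | ∃ Θ : Subgroup G, Λ ≤ Θ ∧ n = rk Θ}.Nonempty := ⟨rk ⊤, ⊤, le_top, rfl⟩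
  obtain ⟨Θ, hΘ, heq⟩ := csInf_mem hne
  exact ⟨Θ, hΘ, heq.symm⟩

theorem intrk_le_genrk {Λ : Subgroup G} (h : Λ.FG) : intrk Λ ≤ genrk G :=
  le_sSup ⟨Λ, h, rfl⟩

theorem one_le_rk {Θ : Subgroup G} (h : Θ ≠ ⊥) : 1 ≤ rk Θ := by
  rw [ENat.one_le_iff_ne_zero]
  intro h0
  have hnt : rk Θ ≠ ⊤ := by rw [h0]; exact ENat.zero_ne_top
  obtain ⟨S, hS, hcard⟩ := exists_gen_of_rk_ne_top hnt
  rw [h0] at hcard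
  have hSe : S = ∅ := Finset.card_eq_zero.mp (by exact_mod_cast hcard)
  apply h
  rw [← hS, hSe]
  simp

theorem one_le_genrk [Nontrivial G] : 1 ≤ genrk G := by
  obtain ⟨g, hg⟩ := exists_ne (1 : G)
  have hfg : (Subgroup.zpowers g).FG := ⟨{g}, by simp [Subgroup.zpowers_eq_closure]⟩
  refine le_trans ?_ (intrk_le_genrk hfg)
  refine le_sInf fun n hn => ?_
  obtain ⟨Θ, hΘ, rfl⟩ := hn
  refine one_le_rk fun hbot => hg ?_
  have : g ∈ Θ := hΘ (Subgroup.mem_zpowers g)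
  rw [hbot] at this
  exact this

end RkLemmas

section Lift

variable {G : Type*} [Group G]

theorem exists_finset_comap {Λ K : Subgroup G} (hK : K ≤ Λ) (S : Finset G)
    (hS : Subgroup.closure (S : Set G) = K) :
    ∃ S' : Finset ↥Λ, S'.card ≤ S.card ∧
      Subgroup.closure (S' : Set ↥Λ) = K.comap Λ.subtype := by
  classical
  have hmem : ∀ s ∈ S, s ∈ Λ := fun s hs => hK (hS ▸ Subgroup.subset_closure hs)
  refine ⟨S.attach.image (fun s => (⟨s.1, hmem s.1 s.2⟩ : ↥Λ)), ?_, ?_⟩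
  · exact Finset.card_image_le.trans (by simp)
  · apply Subgroup.map_injective Λ.subtype_injective
    rw [MonoidHom.map_closure, Finset.coe_image]
    have himg : Λ.subtype '' ((fun s : {x // x ∈ S} => (⟨s.1, hmem s.1 s.2⟩ : ↥Λ)) ''
        (S.attach : Set {x // x ∈ S})) = (S : Set G) := by
      ext x
      simp only [Set.mem_image, Finset.mem_coe, Finset.mem_attach, Subgroup.coe_subtype]
      constructor
      · rintro ⟨y, ⟨s, -, rfl⟩, rfl⟩; exact s.2
      · intro hx; exact ⟨⟨x, hmem x hx⟩, ⟨⟨x, hx⟩, by simp, rfl⟩, rfl⟩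
    rw [himg, hS, Subgroup.map_comap_eq_self (by rw [Λ.range_subtype]; exact hK)]

end Lift

/-- general rank and finite-index subgroups. -/
theorem genrk_finite_index {Γ : Type*} [Group Γ] [Nontrivial Γ] (Λ : Subgroup Γ)
    [Λ.FiniteIndex] :
    genrk Γ ≤ genrk ↥Λ + (Λ.index : ℕ∞) - 1 ∧
    genrk ↥Λ ≤ (Λ.index : ℕ∞) * (genrk Γ - 1) + 1 := by
  classical
  have hn0 : Λ.index ≠ 0 := Subgroup.FiniteIndex.index_ne_zero
  have hn1 : 1 ≤ (Λ.index : ℕ∞) := by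
    exact_mod_cast Nat.one_le_iff_ne_zero.mpr hn0
  constructor
  · -- first inequality
    by_cases htop : genrk ↥Λ = ⊤
    · rw [htop, top_add, ENat.top_sub_one]; exact le_top
    · obtain ⟨d, hd⟩ : ∃ d : ℕ, genrk ↥Λ = (d : ℕ∞) :=
        ⟨(genrk ↥Λ).toNat, (ENat.coe_toNat htop).symm⟩
      refine sSup_le ?_
      rintro ν ⟨M, hMfg, rfl⟩
      -- `N = (Λ ⊓ M).comap Λ.subtype` is a finitely generated subgroup of `Λ`
      haveI : Group.FG ↥M := (Group.fg_iff_subgroup_fg M).mpr hMfg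
      haveI : Group.FG ↥(Λ.subgroupOf M) := Subgroup.fg_of_index_ne_zero _
      have hfgSub : (Λ.subgroupOf M).FG := (Group.fg_iff_subgroup_fg _).mp inferInstance
      have hfgInf : (Λ ⊓ M).FG := by
        obtain ⟨B, hB⟩ := hfgSub
        refine ⟨B.image M.subtype, ?_⟩
        rw [Finset.coe_image, ← MonoidHom.map_closure, hB, Subgroup.subgroupOf_map_subtype]
      obtain ⟨B, hB⟩ := hfgInf
      obtain ⟨C', hC'card, hC'⟩ := exists_finset_comap inf_le_left B hB
      set N : Subgroup ↥Λ := (Λ ⊓ M).comap Λ.subtype with hN_def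
      have hNfg : N.FG := ⟨C', hC'⟩
      have h1 : intrk N ≤ (d : ℕ∞) := hd ▸ intrk_le_genrk hNfg
      obtain ⟨Θ, hNΘ, hΘrk⟩ := exists_intrk N
      have hΘd : rk Θ ≤ (d : ℕ∞) := hΘrk ▸ h1
      have hΘnt : rk Θ ≠ ⊤ := fun hc => by simp [hc] at hΘd
      obtain ⟨SΘ, hSΘ, hSΘcard⟩ := exists_gen_of_rk_ne_top hΘnt
      have hSd : SΘ.card ≤ d := by exact_mod_cast hSΘcard ▸ hΘd
      -- a finite right transversal of `Λ.subgroupOf M` in `M`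
      obtain ⟨R₀, hR₀, hR₀1⟩ := (Λ.subgroupOf M).exists_isComplement_right 1
      haveI : Finite R₀ := hR₀.finite_right_iff.mpr inferInstance
      haveI : Fintype R₀ := Fintype.ofFinite _
      have hR₀card : Nat.card R₀ = (Λ.subgroupOf M).index := by
        rw [Subgroup.index_eq_card]
        exact Nat.card_congr (hR₀.rightQuotientEquiv.symm.trans
          (QuotientGroup.quotientRightRelEquivQuotientLeftRel _))
      have hm_le : (Λ.subgroupOf M).index ≤ Λ.index := by
        have h2 : Λ.relIndex ⊤ ≠ 0 := by rw [Subgroup.relIndex_top_right]; exact hn0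
        have h3 : Λ.relIndex M ≤ Λ.relIndex ⊤ := Subgroup.relIndex_le_of_le_right le_top h2
        rw [Subgroup.relIndex_top_right] at h3
        exact h3
      set RfM : Finset ↥M := R₀.toFinset with hRfM_def
      set Rf : Finset Γ := RfM.image (fun r : ↥M => (r : Γ)) with hRf_def
      have hRfMcard : RfM.card = (Λ.subgroupOf M).index := by
        rw [hRfM_def, Set.toFinset_card, ← Nat.card_eq_fintype_card, hR₀card]
      have hRfcard : Rf.card ≤ Λ.index := by
        rw [hRf_def]
        exact le_trans Finset.card_image_le (le_of_eq_of_le hRfMcard hm_le)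
      have h1Rf : (1 : Γ) ∈ Rf := by
        rw [hRf_def]
        refine Finset.mem_image.mpr ⟨1, ?_, ?_⟩
        · rw [hRfM_def]; exact Set.mem_toFinset.mpr hR₀1
        · simp
      set F : Finset Γ := SΘ.image Λ.subtype ∪ Rf.erase 1 with hF_def
      -- `M` is contained in the closure of `F`
      have hInfle : Λ ⊓ M ≤ Subgroup.closure (F : Set Γ) := by
        have e1 : Λ ⊓ M = N.map Λ.subtype := by
          rw [hN_def, Subgroup.map_comap_eq_self (by rw [Λ.range_subtype]; exact inf_le_left)]
        rw [e1]
        calc N.map Λ.subtype ≤ Θ.map Λ.subtype := Subgroup.map_mono hNΘ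
          _ = Subgroup.closure (Λ.subtype '' (SΘ : Set ↥Λ)) := by
              rw [← hSΘ, MonoidHom.map_closure]
          _ ≤ Subgroup.closure (F : Set Γ) := by
              apply Subgroup.closure_mono
              rw [hF_def, Finset.coe_union, Finset.coe_image]
              exact Set.subset_union_left
      have hMle : M ≤ Subgroup.closure (F : Set Γ) := by
        intro x hx
        obtain ⟨r, hrmem, -⟩ :=
          Subgroup.isComplement_iff_existsUnique_mul_inv_mem.mp hR₀ ⟨x, hx⟩
        have hk : ((⟨x, hx⟩ : ↥M) * (r : ↥M)⁻¹ : ↥M) ∈ Λ.subgroupOf M := hrmem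
        have hkΛ : (((⟨x, hx⟩ : ↥M) * (r : ↥M)⁻¹ : ↥M) : Γ) ∈ Λ ⊓ M := by
          refine ⟨Subgroup.mem_subgroupOf.mp hk, SetLike.coe_mem _⟩
        have hxeq : x = (((⟨x, hx⟩ : ↥M) * (r : ↥M)⁻¹ : ↥M) : Γ) * ((r : ↥M) : Γ) := by
          push_cast
          group
        rw [hxeq]
        refine Subgroup.mul_mem _ (hInfle hkΛ) ?_
        by_cases hr1 : ((r : ↥M) : Γ) = 1
        · rw [hr1]; exact Subgroup.one_mem _
        · apply Subgroup.subset_closure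
          rw [hF_def, Finset.mem_coe, Finset.mem_union]
          refine Or.inr (Finset.mem_erase.mpr ⟨hr1, ?_⟩)
          rw [hRf_def]
          refine Finset.mem_image.mpr ⟨(r : ↥M), ?_, rfl⟩
          rw [hRfM_def]; exact Set.mem_toFinset.mpr r.2
      -- conclude
      have hcardF : F.card ≤ d + (Λ.index - 1) := by
        have h4 : (Rf.erase 1).card = Rf.card - 1 := Finset.card_erase_of_mem h1Rf
        have h5 := Finset.card_union_le (SΘ.image Λ.subtype) (Rf.erase 1)
        have h6 : (SΘ.image Λ.subtype).card ≤ SΘ.card := Finset.card_image_le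
        have h7 : 1 ≤ Λ.index := Nat.pos_of_ne_zero hn0
        rw [hF_def]
        omega
      calc intrk M ≤ rk (Subgroup.closure (F : Set Γ)) := intrk_le_rk hMle
        _ ≤ (F.card : ℕ∞) := rk_le_card rfl
        _ ≤ ((d + (Λ.index - 1) : ℕ) : ℕ∞) := by exact_mod_cast hcardF
        _ = (d : ℕ∞) + (Λ.index : ℕ∞) - 1 := by
            have he : d + (Λ.index - 1) = d + Λ.index - 1 := by omega
            rw [he, ENat.coe_sub, Nat.cast_add, Nat.cast_one]
        _ = genrk ↥Λ + (Λ.index : ℕ∞) - 1 := by rw [hd]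
  · -- second inequality
    by_cases htop : genrk Γ = ⊤
    · rw [htop, ENat.top_sub_one, ENat.mul_top (Nat.cast_ne_zero.mpr hn0), top_add]
      exact le_top
    · obtain ⟨d, hd⟩ : ∃ d : ℕ, genrk Γ = (d : ℕ∞) :=
        ⟨(genrk Γ).toNat, (ENat.coe_toNat htop).symm⟩
      have hd1 : 1 ≤ d := by
        have h1 := one_le_genrk (G := Γ)
        rw [hd] at h1
        exact_mod_cast h1
      refine sSup_le ?_
      rintro ν ⟨M, hMfg, rfl⟩
      -- push `M` forward to `Γ`
      set M' : Subgroup Γ := M.map Λ.subtype with hM'_def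
      have hM'fg : M'.FG := by
        obtain ⟨B, hB⟩ := hMfg
        refine ⟨B.image Λ.subtype, ?_⟩
        rw [Finset.coe_image, ← MonoidHom.map_closure, hB]
      have h1 : intrk M' ≤ (d : ℕ∞) := hd ▸ intrk_le_genrk hM'fg
      obtain ⟨Θ, hM'Θ, hΘrk⟩ := exists_intrk M'
      have hΘd : rk Θ ≤ (d : ℕ∞) := hΘrk ▸ h1
      have hΘnt : rk Θ ≠ ⊤ := fun hc => by simp [hc] at hΘd
      obtain ⟨SΘ, hSΘ, hSΘcard⟩ := exists_gen_of_rk_ne_top hΘnt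
      have hSd : SΘ.card ≤ d := by exact_mod_cast hSΘcard ▸ hΘd
      -- generators of `Θ` as a group
      obtain ⟨S', hS'card, hS'⟩ := exists_finset_comap (le_refl Θ) SΘ hSΘ
      have hS'top : Subgroup.closure (S' : Set ↥Θ) = ⊤ := by
        rw [hS']
        rw [eq_top_iff]
        intro x _
        exact Subgroup.mem_comap.mpr x.2
      -- sharp Schreier inside `Θ`
      have hm_le : (Λ.subgroupOf Θ).index ≤ Λ.index := by
        have h2 : Λ.relIndex ⊤ ≠ 0 := by rw [Subgroup.relIndex_top_right]; exact hn0
        have h3 : Λ.relIndex Θ ≤ Λ.relIndex ⊤ := Subgroup.relIndex_le_of_le_right le_top h2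
        rw [Subgroup.relIndex_top_right] at h3
        exact h3
      have hm0 : (Λ.subgroupOf Θ).index ≠ 0 := Subgroup.FiniteIndex.index_ne_zero
      obtain ⟨T, hTcard, hTtop⟩ := schreier_sharp (Λ.subgroupOf Θ) S' hS'top
      -- transfer the generators of `Λ ⊓ Θ` into `↥Λ`
      set ξ : ↥(Λ.subgroupOf Θ) →* ↥Λ :=
        (Θ.subtype.comp (Λ.subgroupOf Θ).subtype).codRestrict Λ
          (fun t => Subgroup.mem_subgroupOf.mp t.2) with hξ_def
      have hrange : ξ.range = Θ.subgroupOf Λ := by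
        ext x
        constructor
        · rintro ⟨t, rfl⟩
          exact Subgroup.mem_subgroupOf.mpr (t : ↥Θ).2
        · intro hx
          exact ⟨⟨⟨(x : Γ), Subgroup.mem_subgroupOf.mp hx⟩,
            Subgroup.mem_subgroupOf.mpr x.2⟩, rfl⟩
      have hclos : Subgroup.closure ((T.image ξ : Finset ↥Λ) : Set ↥Λ) = Θ.subgroupOf Λ := by
        rw [Finset.coe_image, ← MonoidHom.map_closure, hTtop, ← MonoidHom.range_eq_map, hrange]
      have hrk : rk (Θ.subgroupOf Λ) ≤ ((T.image ξ).card : ℕ∞) := rk_le_card hclos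
      have hMle : M ≤ Θ.subgroupOf Λ := by
        intro x hx
        exact Subgroup.mem_subgroupOf.mpr (hM'Θ ⟨x, hx, rfl⟩)
      -- numeric bound
      have hfin : T.card ≤ Λ.index * (d - 1) + 1 := by
        rcases Nat.eq_zero_or_pos S'.card with h0 | hpos
        · rw [h0, Nat.mul_zero] at hTcard
          omega
        · have h8 : (Λ.subgroupOf Θ).index * S'.card =
              (Λ.subgroupOf Θ).index * (S'.card - 1) + (Λ.subgroupOf Θ).index := by
            rw [← Nat.mul_succ]
            congr 1
            omega
          have h9 : (Λ.subgroupOf Θ).index * (S'.card - 1) ≤ Λ.index * (d - 1) :=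
            Nat.mul_le_mul hm_le (by omega)
          omega
      calc intrk M ≤ rk (Θ.subgroupOf Λ) := intrk_le_rk hMle
        _ ≤ ((T.image ξ).card : ℕ∞) := hrk
        _ ≤ (T.card : ℕ∞) := by exact_mod_cast Finset.card_image_le
        _ ≤ ((Λ.index * (d - 1) + 1 : ℕ) : ℕ∞) := by exact_mod_cast hfin
        _ = (Λ.index : ℕ∞) * ((d : ℕ∞) - 1) + 1 := by
            rw [Nat.cast_add, Nat.cast_mul, Nat.cast_one, ENat.coe_sub, Nat.cast_one]
        _ = (Λ.index : ℕ∞) * (genrk Γ - 1) + 1 := by rw [hd]
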